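/- Let u ∈ C²[0, t_{j+1}] with uniform grid t_s = sτ, and set M₂ = max_{0 ≤ t ≤ t_{j+1}} |u''(t)|. Then the error of the half-layer L1 approximation satisfies |∂₀ₜ^α u(t_{j+1/2}) - Δ₀ₜ^α u| ≤ (2^α M₂ / (4 Γ(2-α))) ((1-α)/2 + 1) τ^{2-α}. -/

import Mathlib

open Real Set Finset

/-- The Caputo fractional derivative of order α ∈ (0,1) of u at time t. -/
noncomputable def caputo (α : ℝ) (u : ℝ → ℝ) (t : ℝ) : ℝ :=
  (1 / Real.Gamma (1 - α)) * ∫ η in (0 : ℝ)..t, deriv u η * (t - η) ^ (-α)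

/-- The coefficients of the half-layer L1 approximation. -/
noncomputable def cL1 (α : ℝ) : ℕ → ℝ := fun j =>
  if j = 0 then (2 : ℝ) ^ (α - 1)
  else ((j : ℝ) + 1/2) ^ (1 - α) - ((j : ℝ) - 1/2) ^ (1 - α)

open intervalIntegral MeasureTheory
set_option maxHeartbeats 3000000

/-- kernel integral -/
lemma lem_kint {α T a b : ℝ} (hα0 : 0 < α) (hα1 : α < 1) :
    ∫ η in a..b, (T - η) ^ (-α) = ((T - a) ^ (1-α) - (T - b) ^ (1-α)) / (1-α) := by
  have h1 : ∫ η in a..b, (T - η) ^ (-α) = ∫ x in (T-b)..(T-a), x ^ (-α) :=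
    intervalIntegral.integral_comp_sub_left (fun x => x ^ (-α)) T
  rw [h1, integral_rpow (Or.inl (by linarith))]
  rw [show -α + 1 = 1 - α by ring]

/-- integrability of g * kernel -/
lemma lem_intg {α T : ℝ} (a b : ℝ) {g : ℝ → ℝ} (hg : Continuous g) (hα1 : α < 1) :
    IntervalIntegrable (fun η => g η * (T - η) ^ (-α)) volume a b := by
  have h1 : IntervalIntegrable (fun x : ℝ => x ^ (-α)) volume (T - a) (T - b) :=
    intervalIntegral.intervalIntegrable_rpow' (by linarith)
  have h2 := h1.comp_sub_left T
  simp only [sub_sub_cancel] at h2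
  exact h2.continuousOn_mul hg.continuousOn

/-- integral of a linear function -/
lemma int_linear (a b c : ℝ) : ∫ ζ in a..b, (c - ζ) = c*(b-a) - (b^2-a^2)/2 := by
  rw [intervalIntegral.integral_sub intervalIntegrable_const intervalIntegral.intervalIntegrable_id,
    intervalIntegral.integral_const, integral_id]
  simp [smul_eq_mul]; ring

/-- |∫_a^η (f ζ - f η) dζ| ≤ M (η-a)²/2 when |f ζ - f η| ≤ M (η - ζ). -/
lemma int_lip_left {f : ℝ → ℝ} (hf : Continuous f) {M a η : ℝ} (haη : a ≤ η)
    (hL : ∀ ζ ∈ Icc a η, |f ζ - f η| ≤ M * (η - ζ)) :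
    |∫ ζ in a..η, (f ζ - f η)| ≤ M * (η - a)^2 / 2 := by
  have h1 : |∫ ζ in a..η, (f ζ - f η)| ≤ ∫ ζ in a..η, |f ζ - f η| :=
    by simpa [Real.norm_eq_abs] using intervalIntegral.norm_integral_le_integral_norm (f := fun ζ => f ζ - f η) (μ := volume) haη
  have h2 : (∫ ζ in a..η, |f ζ - f η|) ≤ ∫ ζ in a..η, M * (η - ζ) := by
    apply intervalIntegral.integral_mono_on haη
    · exact ((hf.sub continuous_const).abs).intervalIntegrable a η
    · exact (Continuous.intervalIntegrable (by continuity) a η)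
    · exact hL
  have h3 : (∫ ζ in a..η, M * (η - ζ)) = M * (η - a)^2 / 2 := by
    rw [intervalIntegral.integral_const_mul, int_linear]; ring
  linarith

lemma int_lip_right {f : ℝ → ℝ} (hf : Continuous f) {M η b : ℝ} (hηb : η ≤ b)
    (hL : ∀ ζ ∈ Icc η b, |f ζ - f η| ≤ M * (ζ - η)) :
    |∫ ζ in η..b, (f ζ - f η)| ≤ M * (b - η)^2 / 2 := by
  have h1 : |∫ ζ in η..b, (f ζ - f η)| ≤ ∫ ζ in η..b, |f ζ - f η| :=
    by simpa [Real.norm_eq_abs] using intervalIntegral.norm_integral_le_integral_norm (f := fun ζ => f ζ - f η) (μ := volume) hηb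
  have h2 : (∫ ζ in η..b, |f ζ - f η|) ≤ ∫ ζ in η..b, M * (ζ - η) := by
    apply intervalIntegral.integral_mono_on hηb
    · exact ((hf.sub continuous_const).abs).intervalIntegrable η b
    · exact (Continuous.intervalIntegrable (by continuity) η b)
    · exact hL
  have h3 : (∫ ζ in η..b, M * (ζ - η)) = M * (b - η)^2 / 2 := by
    have : (∫ ζ in η..b, M * (ζ - η)) = - ∫ ζ in η..b, M * (η - ζ) := by
      rw [← intervalIntegral.integral_neg]; congr 1; ext ζ; ring
    rw [this, intervalIntegral.integral_const_mul, int_linear]; ring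
  linarith

/-- pieces: I1 = ∫_a^η f close to (η-a) f η -/
lemma claim1 {f : ℝ → ℝ} (hf : Continuous f) {M a η : ℝ} (haη : a ≤ η)
    (hL : ∀ ζ ∈ Icc a η, |f ζ - f η| ≤ M * (η - ζ)) :
    |(∫ ζ in a..η, f ζ) - (η - a) * f η| ≤ M * (η - a)^2 / 2 := by
  have h : (∫ ζ in a..η, f ζ) - (η - a) * f η = ∫ ζ in a..η, (f ζ - f η) := by
    rw [intervalIntegral.integral_sub (hf.intervalIntegrable a η) intervalIntegrable_const,
      intervalIntegral.integral_const]
    simp [smul_eq_mul]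
  rw [h]; exact int_lip_left hf haη hL

lemma claim2 {f : ℝ → ℝ} (hf : Continuous f) {M η b : ℝ} (hηb : η ≤ b)
    (hL : ∀ ζ ∈ Icc η b, |f ζ - f η| ≤ M * (ζ - η)) :
    |(∫ ζ in η..b, f ζ) - (b - η) * f η| ≤ M * (b - η)^2 / 2 := by
  have h : (∫ ζ in η..b, f ζ) - (b - η) * f η = ∫ ζ in η..b, (f ζ - f η) := by
    rw [intervalIntegral.integral_sub (hf.intervalIntegrable η b) intervalIntegrable_const,
      intervalIntegral.integral_const]
    simp [smul_eq_mul]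
  rw [h]; exact int_lip_right hf hηb hL

/-- slope bound: |f η - (∫_a^b f)/(b-a)| ≤ M (b-a)/2 -/
lemma slope_bound {f : ℝ → ℝ} (hf : Continuous f) {M a b η : ℝ} (hab : a < b) (hη : η ∈ Icc a b)
    (hL : ∀ x ∈ Icc a b, ∀ y ∈ Icc a b, |f x - f y| ≤ M * |x - y|) :
    |f η - (∫ ζ in a..b, f ζ) / (b - a)| ≤ M * (b - a) / 2 := by
  obtain ⟨haη, hηb⟩ := hη
  have hba : (0:ℝ) < b - a := by linarith
  have hM0 : 0 ≤ M := by
    have h1 := hL a ⟨le_refl a, hab.le⟩ b ⟨hab.le, le_refl b⟩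
    have h2 : |a - b| = b - a := by rw [abs_sub_comm]; exact abs_of_nonneg hba.le
    rw [h2] at h1
    nlinarith [abs_nonneg (f a - f b)]
  have hI : (∫ ζ in a..η, f ζ) + (∫ ζ in η..b, f ζ) = ∫ ζ in a..b, f ζ :=
    intervalIntegral.integral_add_adjacent_intervals (hf.intervalIntegrable a η) (hf.intervalIntegrable η b)
  have hLl : ∀ ζ ∈ Icc a η, |f ζ - f η| ≤ M * (η - ζ) := by
    intro ζ hζ
    have h1 := hL ζ ⟨hζ.1, le_trans hζ.2 hηb⟩ η ⟨haη, hηb⟩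
    have h2 : |ζ - η| = η - ζ := by rw [abs_sub_comm]; exact abs_of_nonneg (by linarith [hζ.2])
    rwa [h2] at h1
  have hLr : ∀ ζ ∈ Icc η b, |f ζ - f η| ≤ M * (ζ - η) := by
    intro ζ hζ
    have h1 := hL ζ ⟨le_trans haη hζ.1, hζ.2⟩ η ⟨haη, hηb⟩
    have h2 : |ζ - η| = ζ - η := abs_of_nonneg (by linarith [hζ.1])
    rwa [h2] at h1
  have c1 := claim1 hf haη hLl
  have c2 := claim2 hf hηb hLr
  set P := (∫ ζ in a..η, f ζ) - (η - a) * f η with hP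
  set Q := (∫ ζ in η..b, f ζ) - (b - η) * f η with hQ
  have e : f η - (∫ ζ in a..b, f ζ) / (b - a) = -((P + Q) / (b - a)) := by
    rw [← hI, hP, hQ]; field_simp; ring
  rw [e, abs_neg, abs_div, abs_of_pos hba, div_le_iff₀ hba]
  nlinarith [abs_add_le P Q, mul_nonneg hM0 (mul_nonneg (sub_nonneg.2 haη) (sub_nonneg.2 hηb))]

/-- interpolation error bound: |∫_a^η f - slope·(η-a)| ≤ M (b-a)²/8 -/
lemma G_bound {f : ℝ → ℝ} (hf : Continuous f) {M a b η : ℝ} (hab : a < b) (hη : η ∈ Icc a b)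
    (hL : ∀ x ∈ Icc a b, ∀ y ∈ Icc a b, |f x - f y| ≤ M * |x - y|) :
    |(∫ ζ in a..η, f ζ) - (∫ ζ in a..b, f ζ) / (b - a) * (η - a)| ≤ M * (b - a)^2 / 8 := by
  obtain ⟨haη, hηb⟩ := hη
  have hba : (0:ℝ) < b - a := by linarith
  have hM0 : 0 ≤ M := by
    have h1 := hL a ⟨le_refl a, hab.le⟩ b ⟨hab.le, le_refl b⟩
    have h2 : |a - b| = b - a := by rw [abs_sub_comm]; exact abs_of_nonneg hba.le
    rw [h2] at h1
    nlinarith [abs_nonneg (f a - f b)]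
  have hI : (∫ ζ in a..η, f ζ) + (∫ ζ in η..b, f ζ) = ∫ ζ in a..b, f ζ :=
    intervalIntegral.integral_add_adjacent_intervals (hf.intervalIntegrable a η) (hf.intervalIntegrable η b)
  have hLl : ∀ ζ ∈ Icc a η, |f ζ - f η| ≤ M * (η - ζ) := by
    intro ζ hζ
    have h1 := hL ζ ⟨hζ.1, le_trans hζ.2 hηb⟩ η ⟨haη, hηb⟩
    have h2 : |ζ - η| = η - ζ := by rw [abs_sub_comm]; exact abs_of_nonneg (by linarith [hζ.2])
    rwa [h2] at h1
  have hLr : ∀ ζ ∈ Icc η b, |f ζ - f η| ≤ M * (ζ - η) := by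
    intro ζ hζ
    have h1 := hL ζ ⟨le_trans haη hζ.1, hζ.2⟩ η ⟨haη, hηb⟩
    have h2 : |ζ - η| = ζ - η := abs_of_nonneg (by linarith [hζ.1])
    rwa [h2] at h1
  have c1 := claim1 hf haη hLl
  have c2 := claim2 hf hηb hLr
  rw [← hI]
  set I1 := ∫ ζ in a..η, f ζ with hI1
  set I2 := ∫ ζ in η..b, f ζ with hI2
  have e : I1 - (I1 + I2)/(b-a)*(η-a)
      = ((b-η)*(I1 - (η-a)*f η) - (η-a)*(I2 - (b-η)*f η))/(b-a) := by
    field_simp; ring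
  rw [e, abs_div, abs_of_pos hba, div_le_iff₀ hba]
  have t : |(b-η)*(I1 - (η-a)*f η) - (η-a)*(I2 - (b-η)*f η)|
      ≤ (b-η)*|I1 - (η-a)*f η| + (η-a)*|I2 - (b-η)*f η| := by
    rw [sub_eq_add_neg]
    refine (abs_add_le _ _).trans ?_
    rw [abs_neg, abs_mul, abs_mul, abs_of_nonneg (by linarith : (0:ℝ) ≤ b - η),
      abs_of_nonneg (by linarith : (0:ℝ) ≤ η - a)]
  nlinarith [t, mul_le_mul_of_nonneg_left c1 (show (0:ℝ) ≤ b-η by linarith),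
    mul_le_mul_of_nonneg_left c2 (show (0:ℝ) ≤ η-a by linarith),
    mul_nonneg (mul_nonneg hM0 hba.le) (sq_nonneg (a+b-2*η))]

/-- IBP bound on an interior interval -/
lemma ibp_bound {α T a b C : ℝ} {u f : ℝ → ℝ} (hud : ∀ x, HasDerivAt u (f x) x)
    (hfc : Continuous f) (hα0 : 0 < α) (hα1 : α < 1) (hab : a < b) (hbT : b < T)
    (hC : 0 ≤ C)
    (hG : ∀ η ∈ Icc a b, |u η - u a - (u b - u a)/(b-a)*(η-a)| ≤ C) :
    |∫ η in a..b, (f η - (u b - u a)/(b-a)) * (T-η) ^ (-α)|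
      ≤ C * ((T-b) ^ (-α) - (T-a) ^ (-α)) := by
  have hba : (0:ℝ) < b - a := by linarith
  have huIcc : uIcc a b = Icc a b := uIcc_of_le hab.le
  set δ := (u b - u a)/(b-a) with hδ
  set K : ℝ → ℝ := fun η => (T-η) ^ (-α) with hK
  set K' : ℝ → ℝ := fun η => α * (T-η) ^ (-α-1) with hK'
  set G : ℝ → ℝ := fun η => u η - u a - δ*(η-a) with hGdef
  have hTx : ∀ x ∈ Icc a b, (0:ℝ) < T - x := fun x hx => by
    have := hx.2; linarith
  have hKd : ∀ x ∈ uIcc a b, HasDerivAt K (K' x) x := by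
    intro x hx
    rw [huIcc] at hx
    have h1 : HasDerivAt (fun η : ℝ => T - η) (-1) x := by
      simpa using (hasDerivAt_id x).const_sub T
    have h2 := (Real.hasDerivAt_rpow_const (x := T - x) (p := -α)
      (Or.inl (ne_of_gt (hTx x hx)))).comp x h1
    have h3 : K' x = -α * (T-x) ^ (-α-1) * -1 := by simp only [hK']; ring
    rw [h3]; exact h2
  have hGd : ∀ x ∈ uIcc a b, HasDerivAt G (f x - δ) x := by
    intro x _
    have h1 : HasDerivAt (fun η : ℝ => δ*(η-a)) δ x := by
      simpa using ((hasDerivAt_id x).sub_const a).const_mul δ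
    exact ((hud x).sub_const (u a)).sub h1
  have hK'c : ContinuousOn K' (uIcc a b) := by
    rw [huIcc]
    apply ContinuousOn.mul continuousOn_const
    intro x hx
    exact ((Real.continuousAt_rpow_const _ _ (Or.inl (ne_of_gt (hTx x hx)))).comp
      ((continuous_const.sub continuous_id).continuousAt)).continuousWithinAt
  have hK'i : IntervalIntegrable K' volume a b := hK'c.intervalIntegrable
  have hfδi : IntervalIntegrable (fun x => f x - δ) volume a b :=
    ((hfc.sub continuous_const)).intervalIntegrable a b
  have hibp := intervalIntegral.integral_mul_deriv_eq_deriv_mul hKd hGd hK'i hfδi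
  have hGa : G a = 0 := by simp [hGdef]
  have hGb : G b = 0 := by
    simp only [hGdef, hδ]
    field_simp
    ring
  have heq : (∫ η in a..b, (f η - δ) * K η) = - ∫ η in a..b, K' η * G η := by
    have : (∫ η in a..b, K η * (f η - δ)) = ∫ η in a..b, (f η - δ) * K η := by
      apply intervalIntegral.integral_congr; intro x _; exact mul_comm _ _
    rw [← this, hibp, hGa, hGb]; ring
  rw [heq, abs_neg]
  have hK'nn : ∀ x ∈ Icc a b, 0 ≤ K' x := fun x hx =>
    mul_nonneg hα0.le (Real.rpow_nonneg (hTx x hx).le _)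
  have hGc : Continuous G := by
    have huc : Continuous u := by
      have : Differentiable ℝ u := fun x => (hud x).differentiableAt
      exact this.continuous
    exact (huc.sub continuous_const).sub (continuous_const.mul (continuous_id.sub continuous_const))
  have hKGi : IntervalIntegrable (fun η => K' η * G η) volume a b :=
    (hK'c.mul hGc.continuousOn).intervalIntegrable
  have hCK'i : IntervalIntegrable (fun η => C * K' η) volume a b :=
    (continuousOn_const.mul hK'c).intervalIntegrable
  have h5 : |∫ η in a..b, K' η * G η| ≤ ∫ η in a..b, C * K' η := by
    refine (by simpa only [Real.norm_eq_abs] using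
      intervalIntegral.norm_integral_le_integral_norm (f := fun η => K' η * G η) (μ := volume) hab.le :
      |∫ η in a..b, K' η * G η| ≤ ∫ η in a..b, |K' η * G η|).trans ?_
    apply intervalIntegral.integral_mono_on hab.le hKGi.abs hCK'i
    intro x hx
    rw [abs_mul, abs_of_nonneg (hK'nn x hx)]
    calc K' x * |G x| ≤ K' x * C := mul_le_mul_of_nonneg_left (hG x hx) (hK'nn x hx)
      _ = C * K' x := mul_comm _ _
  have h6 : (∫ η in a..b, C * K' η) = C * (K b - K a) := by
    rw [intervalIntegral.integral_const_mul, intervalIntegral.integral_eq_sub_of_hasDerivAt hKd hK'i]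
  have h7 : K b - K a = (T-b) ^ (-α) - (T-a) ^ (-α) := by simp [hK]
  rw [h6, h7] at h5
  exact h5

/-- Lemma 2: the half-layer L1 approximation error satisfies
|∂₀ₜ^α u(t_{j+1/2}) - Δ₀ₜ^α u| ≤ (2^α M₂ / (4 Γ(2-α))) ((1-α)/2 + 1) τ^{2-α}. -/
theorem stmt_8 (α τ : ℝ) (hα0 : 0 < α) (hα1 : α < 1) (hτ : 0 < τ)
    (j : ℕ) (u : ℝ → ℝ) (hu : ContDiff ℝ 2 u) (M₂ : ℝ)
    (hM : ∀ t ∈ Icc (0 : ℝ) (((j : ℝ) + 1) * τ), |iteratedDeriv 2 u t| ≤ M₂) :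
    |caputo α u (((j : ℝ) + 1/2) * τ)
        - (τ ^ (1 - α) / Real.Gamma (2 - α))
          * ∑ s ∈ Finset.range (j + 1),
              cL1 α (j - s) * (u (((s : ℝ) + 1) * τ) - u ((s : ℝ) * τ)) / τ|
      ≤ (2 : ℝ) ^ α * M₂ / (4 * Real.Gamma (2 - α)) * ((1 - α) / 2 + 1) * τ ^ (2 - α) := by
  -- derivative facts
  have hder : Differentiable ℝ u ∧ Differentiable ℝ (deriv u) ∧ Continuous (deriv (deriv u))
      ∧ deriv (deriv u) = iteratedDeriv 2 u := by
    have h2 : ContDiff ℝ (1+1 : ℕ) u := by exact_mod_cast hu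
    rw [show ((1+1:ℕ) : WithTop ℕ∞) = (1:WithTop ℕ∞) + 1 by norm_num] at h2
    have h3 := contDiff_succ_iff_deriv.mp h2
    have h4 : ContDiff ℝ (0+1 : WithTop ℕ∞) (deriv u) := by
      have := h3.2.2
      rwa [show (1:WithTop ℕ∞) = 0 + 1 by norm_num] at this
    have h5 := contDiff_succ_iff_deriv.mp h4
    exact ⟨h3.1, h5.1, h5.2.2.continuous, by rw [iteratedDeriv_succ, iteratedDeriv_one]⟩
  obtain ⟨hudiff, hfdiff, hf2c, hf2eq⟩ := hder
  set f := deriv u with hfdef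
  have hfc : Continuous f := hfdiff.continuous
  have hud : ∀ x, HasDerivAt u (f x) x := fun x => (hudiff x).hasDerivAt
  set T : ℝ := ((j:ℝ) + 1/2) * τ with hTdef
  set B : ℝ := ((j:ℝ) + 1) * τ with hBdef
  have h1α : (0:ℝ) < 1 - α := by linarith
  have hΓ1 : 0 < Real.Gamma (1-α) := Real.Gamma_pos_of_pos h1α
  have hΓ2eq : Real.Gamma (2-α) = (1-α) * Real.Gamma (1-α) := by
    rw [show (2:ℝ)-α = (1-α)+1 by ring, Real.Gamma_add_one (ne_of_gt h1α)]
  have hΓ2 : 0 < Real.Gamma (2-α) := by rw [hΓ2eq]; positivity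
  have hT0 : 0 < T := by
    rw [hTdef]; apply mul_pos _ hτ; positivity
  have hB0 : 0 < B := by
    rw [hBdef]; apply mul_pos _ hτ; positivity
  have hTB : T < B := by
    rw [hTdef, hBdef]
    apply mul_lt_mul_of_pos_right _ hτ
    norm_num
  have hM0 : 0 ≤ M₂ := le_trans (abs_nonneg _) (hM 0 ⟨le_refl _, hB0.le⟩)
  have hLip : ∀ x ∈ Icc (0:ℝ) B, ∀ y ∈ Icc (0:ℝ) B, |f x - f y| ≤ M₂ * |x - y| := by
    intro x hx y hy
    have h := Convex.norm_image_sub_le_of_norm_deriv_le (f := f) (s := Icc (0:ℝ) B)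
      (fun z _ => hfdiff z) (fun z hz => by rw [Real.norm_eq_abs, hf2eq]; exact hM z hz)
      (convex_Icc _ _) hy hx
    simpa [Real.norm_eq_abs] using h
  have hFTC : ∀ x y : ℝ, (∫ ζ in x..y, f ζ) = u y - u x := fun x y =>
    intervalIntegral.integral_deriv_eq_sub' u hfdef.symm (fun z _ => hudiff z) hfc.continuousOn
  -- the grid
  set tk : ℕ → ℝ := fun s => min ((s:ℝ)*τ) T with htkdef
  have htk_le : ∀ s : ℕ, s ≤ j → tk s = (s:ℝ)*τ := by
    intro s hs
    apply min_eq_left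
    rw [hTdef]
    apply mul_le_mul_of_nonneg_right _ hτ.le
    have : (s:ℝ) ≤ (j:ℝ) := Nat.cast_le.mpr hs
    linarith
  have htk_top : tk (j+1) = T := by
    apply min_eq_right
    rw [hTdef]; push_cast
    apply mul_le_mul_of_nonneg_right _ hτ.le
    linarith
  have htk0 : tk 0 = 0 := by rw [htk_le 0 (Nat.zero_le _)]; simp
  -- slopes and error integrals
  set D : ℕ → ℝ := fun s => (u (((s:ℝ)+1)*τ) - u ((s:ℝ)*τ)) / τ with hDdef
  set E : ℕ → ℝ := fun s => ∫ η in tk s..tk (s+1), (f η - D s) * (T-η) ^ (-α) with hEdef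
  -- splitting the Caputo integral
  have hsplit : (∑ s ∈ Finset.range (j+1), ∫ η in tk s..tk (s+1), f η * (T-η) ^ (-α))
      = ∫ η in (0:ℝ)..T, f η * (T-η) ^ (-α) := by
    have h := intervalIntegral.sum_integral_adjacent_intervals
      (a := tk) (n := j+1) (μ := MeasureTheory.volume)
      (f := fun η => f η * (T-η) ^ (-α)) (fun k _ => lem_intg (tk k) (tk (k+1)) hfc hα1)
    rwa [htk0, htk_top] at h
  -- the discrete sum as integrals of the kernel
  have hdisc : (τ ^ (1-α) / Real.Gamma (2-α)) * ∑ s ∈ Finset.range (j+1),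
        cL1 α (j - s) * (u (((s:ℝ)+1)*τ) - u ((s:ℝ)*τ)) / τ
      = (1/Real.Gamma (1-α)) * ∑ s ∈ Finset.range (j+1),
        D s * ∫ η in tk s..tk (s+1), (T-η) ^ (-α) := by
    rw [Finset.mul_sum, Finset.mul_sum]
    apply Finset.sum_congr rfl
    intro s hs
    have hsle : s ≤ j := Nat.lt_succ_iff.mp (Finset.mem_range.mp hs)
    have hKint : (∫ η in tk s..tk (s+1), (T-η) ^ (-α))
        = ((T - tk s) ^ (1-α) - (T - tk (s+1)) ^ (1-α)) / (1-α) := lem_kint hα0 hα1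
    rcases eq_or_lt_of_le hsle with heq | hlt
    · -- s = j : last half interval
      subst heq
      rw [hKint, htk_le s le_rfl, htk_top, sub_self,
        Real.zero_rpow (by positivity : (1:ℝ) - α ≠ 0)]
      have e2 : T - (s:ℝ)*τ = τ/2 := by rw [hTdef]; ring
      have e3 : ((τ/2:ℝ)) ^ (1-α) = τ ^ (1-α) * (2:ℝ) ^ (α-1) := by
        rw [Real.div_rpow hτ.le (by norm_num), show α-1 = -(1-α) by ring,
          Real.rpow_neg (by norm_num : (0:ℝ) ≤ 2), div_eq_mul_inv]
      have e4 : cL1 α (s - s) = (2:ℝ) ^ (α-1) := by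
        rw [Nat.sub_self]; simp [cL1]
      rw [e2, e3, e4, hDdef, hΓ2eq]
      field_simp
      ring
    · -- s < j : interior interval
      have hs1 : s + 1 ≤ j := hlt
      rw [hKint, htk_le s hsle, htk_le (s+1) hs1]
      have e1 : cL1 α (j - s) = ((j:ℝ)-(s:ℝ)+1/2) ^ (1-α) - ((j:ℝ)-(s:ℝ)-1/2) ^ (1-α) := by
        rw [cL1, if_neg (Nat.sub_ne_zero_of_lt hlt), Nat.cast_sub hsle]
      have hjs : (1:ℝ) ≤ (j:ℝ)-(s:ℝ) := by
        have : ((s:ℝ)+1) ≤ (j:ℝ) := by exact_mod_cast hlt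
        linarith
      have e2 : T - (s:ℝ)*τ = ((j:ℝ)-(s:ℝ)+1/2)*τ := by rw [hTdef]; ring
      have e3 : T - (((s:ℕ)+1 : ℕ):ℝ)*τ = ((j:ℝ)-(s:ℝ)-1/2)*τ := by
        rw [hTdef]; push_cast; ring
      have e4 : (((j:ℝ)-(s:ℝ)+1/2)*τ) ^ (1-α)
          = ((j:ℝ)-(s:ℝ)+1/2) ^ (1-α) * τ ^ (1-α) := Real.mul_rpow (by linarith) hτ.le
      have e5 : (((j:ℝ)-(s:ℝ)-1/2)*τ) ^ (1-α)
          = ((j:ℝ)-(s:ℝ)-1/2) ^ (1-α) * τ ^ (1-α) := Real.mul_rpow (by linarith) hτ.le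
      rw [e2, e3, e4, e5, e1, hDdef, hΓ2eq]
      field_simp
  -- decomposition of E
  have hEdecomp : ∀ s : ℕ, E s = (∫ η in tk s..tk (s+1), f η * (T-η) ^ (-α))
      - D s * ∫ η in tk s..tk (s+1), (T-η) ^ (-α) := by
    intro s
    simp only [hEdef]
    have e : (fun η => (f η - D s) * (T-η) ^ (-α))
        = fun η => f η * (T-η) ^ (-α) - D s * (T-η) ^ (-α) := by
      funext η; ring
    rw [e, intervalIntegral.integral_sub (lem_intg _ _ hfc hα1)
      (lem_intg _ _ continuous_const hα1), intervalIntegral.integral_const_mul]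
  -- the key identity
  have hkey : caputo α u T - (τ ^ (1-α) / Real.Gamma (2-α)) * (∑ s ∈ Finset.range (j+1),
        cL1 α (j - s) * (u (((s:ℝ)+1)*τ) - u ((s:ℝ)*τ)) / τ)
      = (1/Real.Gamma (1-α)) * ∑ s ∈ Finset.range (j+1), E s := by
    rw [hdisc]
    show (1 / Real.Gamma (1 - α)) * (∫ η in (0:ℝ)..T, deriv u η * (T - η) ^ (-α)) - _ = _
    rw [← hfdef, ← hsplit, Finset.mul_sum, Finset.mul_sum, Finset.mul_sum,
      ← Finset.sum_sub_distrib]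
    apply Finset.sum_congr rfl
    intro s _
    rw [hEdecomp s]
    ring
  rw [hkey, abs_mul, abs_of_pos (by positivity : (0:ℝ) < 1/Real.Gamma (1-α))]
  -- per-interval bounds
  set g : ℕ → ℝ := fun s => (T - (s:ℝ)*τ) ^ (-α) with hgdef
  have hper : ∀ s ∈ Finset.range j, |E s| ≤ (M₂*τ^2/8) * (g (s+1) - g s) := by
    intro s hs
    have hslt : s < j := Finset.mem_range.mp hs
    set p : ℝ := (s:ℝ)*τ with hpdef
    set q : ℝ := ((s:ℝ)+1)*τ with hqdef
    have hpq : p < q := by rw [hpdef, hqdef]; nlinarith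
    have hqp : q - p = τ := by rw [hpdef, hqdef]; ring
    have hqT : q < T := by
      rw [hqdef, hTdef]
      apply mul_lt_mul_of_pos_right _ hτ
      have : ((s:ℝ)+1) ≤ (j:ℝ) := by exact_mod_cast hslt
      linarith
    have hp0 : 0 ≤ p := by rw [hpdef]; positivity
    have hqB : q ≤ B := by
      rw [hqdef, hBdef]
      apply mul_le_mul_of_nonneg_right _ hτ.le
      have : ((s:ℝ)+1) ≤ (j:ℝ) := by exact_mod_cast hslt
      linarith
    have hsub : Icc p q ⊆ Icc (0:ℝ) B := Icc_subset_Icc hp0 hqB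
    have hL' : ∀ x ∈ Icc p q, ∀ y ∈ Icc p q, |f x - f y| ≤ M₂ * |x - y| :=
      fun x hx y hy => hLip x (hsub hx) y (hsub hy)
    have hG : ∀ η ∈ Icc p q, |u η - u p - (u q - u p)/(q-p)*(η-p)| ≤ M₂*τ^2/8 := by
      intro η hη
      have h := G_bound hfc hpq hη hL'
      rw [hFTC p η, hFTC p q] at h
      calc |u η - u p - (u q - u p)/(q-p)*(η-p)| ≤ M₂*(q-p)^2/8 := h
        _ = M₂*τ^2/8 := by rw [hqp]
    have hEeq : E s = ∫ η in p..q, (f η - (u q - u p)/(q-p)) * (T-η) ^ (-α) := by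
      have e1 : tk s = p := by rw [htk_le s hslt.le, hpdef]
      have e2 : tk (s+1) = q := by
        rw [htk_le (s+1) hslt, hqdef]; push_cast; ring
      have e3 : D s = (u q - u p)/(q-p) := by
        rw [hqp, hpdef, hqdef]
      simp only [hEdef]
      rw [e1, e2, e3]
    have hbd := ibp_bound hud hfc hα0 hα1 hpq hqT (by positivity) hG
    rw [← hEeq] at hbd
    have hg1 : g (s+1) = (T - q) ^ (-α) := by
      simp only [hgdef]; rw [hqdef]; push_cast; try ring_nf
    have hg0 : g s = (T - p) ^ (-α) := by simp only [hgdef]; try rw [hpdef]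
    rw [hg1, hg0]
    exact hbd
  -- last (half) interval bound
  have hlast : |E j| ≤ (M₂*τ/2) * ((τ/2) ^ (1-α)/(1-α)) := by
    set p : ℝ := (j:ℝ)*τ with hpdef
    have hpT : p < T := by
      rw [hpdef, hTdef]
      apply mul_lt_mul_of_pos_right _ hτ
      linarith
    have hpB : p < B := by
      rw [hpdef, hBdef]
      apply mul_lt_mul_of_pos_right _ hτ
      linarith
    have hp0 : 0 ≤ p := by rw [hpdef]; positivity
    have hBp : B - p = τ := by rw [hpdef, hBdef]; ring
    have hsub : Icc p B ⊆ Icc (0:ℝ) B := Icc_subset_Icc hp0 le_rfl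
    have hL' : ∀ x ∈ Icc p B, ∀ y ∈ Icc p B, |f x - f y| ≤ M₂ * |x - y| :=
      fun x hx y hy => hLip x (hsub hx) y (hsub hy)
    have hDj : D j = (∫ ζ in p..B, f ζ) / (B - p) := by
      rw [hFTC p B, hBp, hpdef, hBdef]
    have hpw : ∀ η ∈ Icc p T, |f η - D j| ≤ M₂*τ/2 := by
      intro η hη
      have hη' : η ∈ Icc p B := ⟨hη.1, le_trans hη.2 hTB.le⟩
      have h := slope_bound hfc hpB hη' hL'
      rw [← hDj] at h
      calc |f η - D j| ≤ M₂*(B-p)/2 := h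
        _ = M₂*τ/2 := by rw [hBp]
    have hEeq : E j = ∫ η in p..T, (f η - D j) * (T-η) ^ (-α) := by
      simp only [hEdef]
      rw [htk_le j le_rfl, htk_top, hpdef]
    have hIi : IntervalIntegrable (fun η => (f η - D j) * (T-η) ^ (-α))
        MeasureTheory.volume p T := lem_intg _ _ (hfc.sub continuous_const) hα1
    have hIm : IntervalIntegrable (fun η => (M₂*τ/2) * (T-η) ^ (-α))
        MeasureTheory.volume p T := lem_intg _ _ continuous_const hα1
    have h1 : |E j| ≤ ∫ η in p..T, (M₂*τ/2) * (T-η) ^ (-α) := by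
      rw [hEeq]
      have hnorm := intervalIntegral.norm_integral_le_integral_norm
        (f := fun η => (f η - D j) * (T-η) ^ (-α)) (μ := MeasureTheory.volume) hpT.le
      simp only [Real.norm_eq_abs] at hnorm
      refine hnorm.trans ?_
      apply intervalIntegral.integral_mono_on hpT.le hIi.abs hIm
      intro x hx
      have hTx : 0 ≤ T - x := by linarith [hx.2]
      rw [abs_mul, abs_of_nonneg (Real.rpow_nonneg hTx _)]
      exact mul_le_mul_of_nonneg_right (hpw x hx) (Real.rpow_nonneg hTx _)
    have h2 : (∫ η in p..T, (M₂*τ/2) * (T-η) ^ (-α)) = (M₂*τ/2) * ((τ/2) ^ (1-α)/(1-α)) := by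
      rw [intervalIntegral.integral_const_mul, lem_kint hα0 hα1, sub_self,
        Real.zero_rpow (by positivity : (1:ℝ) - α ≠ 0)]
      have : T - p = τ/2 := by rw [hpdef, hTdef]; ring
      rw [this]
      ring
    rw [h2] at h1
    exact h1
  -- assemble
  have hsum : |∑ s ∈ Finset.range (j+1), E s|
      ≤ (M₂*τ^2/8) * ((τ/2) ^ (-α)) + (M₂*τ/2) * ((τ/2) ^ (1-α)/(1-α)) := by
    have habs : |∑ s ∈ Finset.range (j+1), E s| ≤ (∑ s ∈ Finset.range j, |E s|) + |E j| := by
      rw [Finset.sum_range_succ]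
      exact (abs_add_le _ _).trans (add_le_add_left (Finset.abs_sum_le_sum_abs _ _) _)
    have hmid : (∑ s ∈ Finset.range j, |E s|) ≤ (M₂*τ^2/8) * ((τ/2) ^ (-α)) := by
      calc (∑ s ∈ Finset.range j, |E s|)
          ≤ ∑ s ∈ Finset.range j, (M₂*τ^2/8) * (g (s+1) - g s) := Finset.sum_le_sum hper
        _ = (M₂*τ^2/8) * (g j - g 0) := by
            rw [← Finset.mul_sum, Finset.sum_range_sub g j]
        _ ≤ (M₂*τ^2/8) * ((τ/2) ^ (-α)) := by
            have hgj : g j = (τ/2) ^ (-α) := by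
              simp only [hgdef]
              congr 1
              rw [hTdef]; ring
            have hg0 : (0:ℝ) ≤ g 0 := by
              simp only [hgdef]
              apply Real.rpow_nonneg
              push_cast
              linarith
            rw [hgj]
            nlinarith [hg0, mul_nonneg (mul_nonneg hM0 (sq_nonneg τ)) hg0]
    linarith
  calc (1/Real.Gamma (1-α)) * |∑ s ∈ Finset.range (j+1), E s|
      ≤ (1/Real.Gamma (1-α)) * ((M₂*τ^2/8) * ((τ/2) ^ (-α)) + (M₂*τ/2) * ((τ/2) ^ (1-α)/(1-α))) :=
        mul_le_mul_of_nonneg_left hsum (by positivity)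
    _ = (2 : ℝ) ^ α * M₂ / (4 * Real.Gamma (2 - α)) * ((1 - α) / 2 + 1) * τ ^ (2 - α) := by
        have h2α : (0:ℝ) < (2:ℝ) ^ α := Real.rpow_pos_of_pos (by norm_num) α
        have r1 : ((τ/2:ℝ)) ^ (-α) = τ ^ (-α) * (2:ℝ) ^ α := by
          rw [Real.div_rpow hτ.le (by norm_num), Real.rpow_neg (by norm_num : (0:ℝ) ≤ 2)]
          field_simp
        have r2 : ((τ/2:ℝ)) ^ (1-α) = τ ^ (1-α) * (2:ℝ) ^ α / 2 := by
          rw [Real.div_rpow hτ.le (by norm_num),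
            Real.rpow_sub (by norm_num : (0:ℝ) < 2), Real.rpow_one]
          field_simp
        have r3 : τ^2 * τ ^ (-α) = τ ^ (2-α) := by
          rw [show (2:ℝ)-α = ((2:ℕ):ℝ) + (-α) by push_cast; ring, Real.rpow_add hτ,
            Real.rpow_natCast]
        have r4 : τ * τ ^ (1-α) = τ ^ (2-α) := by
          rw [show (2:ℝ)-α = 1 + (1-α) by ring, Real.rpow_add hτ, Real.rpow_one]
        have r5 : τ ^ (1-α) = τ * τ ^ (-α) := by
          rw [show (1:ℝ)-α = 1 + (-α) by ring, Real.rpow_add hτ, Real.rpow_one]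
        rw [r1, r2, r5, hΓ2eq, ← r3]
        field_simp
        ring
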